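/- Let G be a group, k a field, and A^{ext} = ⊕_{g∈G} A^{ext}_g a G-graded k-algebra with A = A^{ext}_e. The map β : A^{ext} ⊗_A A^{ext} → A^{ext} ⊗ kG defined by β(a ⊗ b) = Σ_g a·b_g ⊗ g (where b = Σ b_g is the decomposition into homogeneous components) is bijective if and only if A^{ext} is strongly graded, i.e., A^{ext}_g · A^{ext}_h = A^{ext}_{gh} for all g, h ∈ G. -/

import Mathlib

open TensorProduct

lemma exists_fin_rep {k R : Type*} [CommRing k] [Ring R] [Algebra k R]
    {M N : Submodule k R} {c : R} (h : c ∈ M * N) :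
    ∃ (n : ℕ) (v u : Fin n → R), (∀ i, v i ∈ M) ∧ (∀ i, u i ∈ N) ∧ ∑ i, v i * u i = c := by
  refine Submodule.mul_induction_on h ?_ ?_
  · intro m hm n hn
    exact ⟨1, fun _ => m, fun _ => n, fun _ => hm, fun _ => hn, by simp⟩
  · rintro x y ⟨n₁, v₁, u₁, hv₁, hu₁, hs₁⟩ ⟨n₂, v₂, u₂, hv₂, hu₂, hs₂⟩
    refine ⟨n₁ + n₂, Fin.append v₁ v₂, Fin.append u₁ u₂, ?_, ?_, ?_⟩
    · intro i
      refine Fin.addCases (fun j => ?_) (fun j => ?_) i <;>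
        simp [Fin.append_left, Fin.append_right, hv₁, hv₂]
    · intro i
      refine Fin.addCases (fun j => ?_) (fun j => ?_) i <;>
        simp [Fin.append_left, Fin.append_right, hu₁, hu₂]
    · rw [Fin.sum_univ_add]
      simp [Fin.append_left, Fin.append_right, hs₁, hs₂]


/-- Let `A^ext = ⊕_g A^ext_g` be a `G`-graded `k`-algebra with identity
component `A = A^ext_e`. The canonical map `β : A^ext ⊗_A A^ext → A^ext ⊗ kG`,
`β(a ⊗ b) = Σ_g a·b_g ⊗ g`, is bijective if and only if `A^ext` is strongly graded,
i.e. `A^ext_g · A^ext_h = A^ext_{gh}` for all `g, h`. (The grading group is written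
additively; `A^ext ⊗_A A^ext` is realized as the quotient of `A^ext ⊗_k A^ext` by the
relations `xa ⊗ y = x ⊗ ay`, `a ∈ A`.) -/
theorem stmt4 {k : Type*} [CommRing k] {G : Type*} [AddGroup G] [DecidableEq G]
    {R : Type*} [Ring R] [Algebra k R]
    (𝒜 : G → Submodule k R) [GradedRing 𝒜]
    [∀ (i : G) (x : ↥(𝒜 i)), Decidable (x ≠ 0)]
    -- the submodule of `A^ext ⊗_k A^ext` implementing the tensor product over `A = 𝒜 0`
    (N : Submodule k (R ⊗[k] R))
    (hN : N = Submodule.span k {z : R ⊗[k] R |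
      ∃ x y a : R, a ∈ 𝒜 0 ∧ z = (x * a) ⊗ₜ y - x ⊗ₜ (a * y)})
    -- the canonical map β on `A^ext ⊗_A A^ext`
    (βbar : (R ⊗[k] R) ⧸ N →ₗ[k] R ⊗[k] MonoidAlgebra k (Multiplicative G))
    (hβ : ∀ x y : R, βbar (Submodule.Quotient.mk (x ⊗ₜ y)) =
      (DirectSum.decompose 𝒜 y).sum fun g yg =>
        (x * (yg : R)) ⊗ₜ MonoidAlgebra.single (Multiplicative.ofAdd g) (1 : k)) :
    Function.Bijective βbar ↔ ∀ g h : G, 𝒜 g * 𝒜 h = 𝒜 (g + h) := by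
  classical
  have hrel : ∀ (x y a : R), a ∈ 𝒜 0 →
      (Submodule.Quotient.mk ((x * a) ⊗ₜ[k] y) : (R ⊗[k] R) ⧸ N)
        = Submodule.Quotient.mk (x ⊗ₜ[k] (a * y)) := by
    intro x y a ha
    rw [Submodule.Quotient.eq, hN]
    exact Submodule.subset_span ⟨x, y, a, ha, rfl⟩
  have hβhom : ∀ (x b : R) (j : G), b ∈ 𝒜 j →
      βbar (Submodule.Quotient.mk (x ⊗ₜ b)) =
        (x * b) ⊗ₜ MonoidAlgebra.single (Multiplicative.ofAdd j) (1 : k) := by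
    intro x b j hb
    rw [hβ, DirectSum.decompose_of_mem 𝒜 hb]
    have : (DirectSum.of (fun i => ↥(𝒜 i)) j ⟨b, hb⟩) = DFinsupp.single j ⟨b, hb⟩ := rfl
    rw [this, DFinsupp.sum_single_index (by simp)]
  constructor
  · -- bijective → strongly graded
    intro hbij g h
    have key : ∀ g : G, (1 : R) ∈ 𝒜 (-g) * 𝒜 g := by
      intro g
      obtain ⟨z, hz⟩ := hbij.2 ((1 : R) ⊗ₜ MonoidAlgebra.single (Multiplicative.ofAdd g) (1 : k))
      obtain ⟨w, rfl⟩ := Submodule.Quotient.mk_surjective N z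
      set ev : MonoidAlgebra k (Multiplicative G) →ₗ[k] k :=
        Finsupp.lapply (Multiplicative.ofAdd g) ∘ₗ (MonoidAlgebra.coeffLinearEquiv k).toLinearMap with hev
      set φ : R ⊗[k] MonoidAlgebra k (Multiplicative G) →ₗ[k] R :=
        (TensorProduct.rid k R).toLinearMap ∘ₗ LinearMap.lTensor R ev with hφdef
      set p0 : R →ₗ[k] R :=
        (𝒜 0).subtype ∘ₗ (DFinsupp.lapply 0) ∘ₗ (DirectSum.decomposeLinearEquiv 𝒜).toLinearMap
        with hp0def
      have hp0 : ∀ r : R, p0 r = ((DirectSum.decompose 𝒜 r) 0 : R) := fun r => rfl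
      have hφ : ∀ w : R ⊗[k] R,
          p0 (φ (βbar (Submodule.Quotient.mk w))) ∈ 𝒜 (-g) * 𝒜 g := by
        intro w
        induction w using TensorProduct.induction_on with
        | zero =>
          rw [show (Submodule.Quotient.mk (0 : R ⊗[k] R) : (R ⊗[k] R) ⧸ N) = 0 from rfl,
            map_zero, map_zero, map_zero]
          exact zero_mem _
        | add a b ha hb =>
          rw [show (Submodule.Quotient.mk (a + b : R ⊗[k] R) : (R ⊗[k] R) ⧸ N)
              = Submodule.Quotient.mk a + Submodule.Quotient.mk b from rfl,
            map_add, map_add, map_add]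
          exact add_mem ha hb
        | tmul x y =>
          rw [hβ, map_dfinsuppSum, map_dfinsuppSum]
          refine dfinsuppSum_mem _ _ _ fun j _ => ?_
          have hterm : φ ((x * ((DirectSum.decompose 𝒜 y) j : R)) ⊗ₜ
              MonoidAlgebra.single (Multiplicative.ofAdd j) (1 : k))
              = if j = g then x * ((DirectSum.decompose 𝒜 y) j : R) else 0 := by
            rw [hφdef]
            simp only [LinearMap.coe_comp, Function.comp_apply, LinearMap.lTensor_tmul,
              LinearEquiv.coe_coe, TensorProduct.rid_tmul, hev, Finsupp.lapply_apply,
              MonoidAlgebra.coeffLinearEquiv_apply]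
            by_cases hj : j = g
            · subst hj
              rw [if_pos rfl]
              rw [MonoidAlgebra.coeff_single, Finsupp.single_eq_same]
              rw [one_smul]
            · have hne : (Multiplicative.ofAdd j) ≠ (Multiplicative.ofAdd g) := by
                simpa using hj
              rw [if_neg hj]
              rw [MonoidAlgebra.coeff_single, Finsupp.single_eq_of_ne' hne]
              rw [zero_smul]
          rw [hterm]
          by_cases hj : j = g
          · subst hj
            rw [if_pos rfl, hp0]
            have hmul := DirectSum.coe_decompose_mul_add_of_right_mem 𝒜 (a := x) (i := -j)
              (SetLike.coe_mem ((DirectSum.decompose 𝒜 y) j))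
            rw [neg_add_cancel] at hmul
            rw [hmul]
            exact Submodule.mul_mem_mul (SetLike.coe_mem _) (SetLike.coe_mem _)
          · rw [if_neg hj, map_zero]
            exact zero_mem _
      have := hφ w
      rw [hz] at this
      have hcomp : p0 (φ ((1 : R) ⊗ₜ MonoidAlgebra.single (Multiplicative.ofAdd g) (1 : k)))
          = 1 := by
        rw [hφdef]
        simp only [LinearMap.coe_comp, Function.comp_apply, LinearMap.lTensor_tmul,
          LinearEquiv.coe_coe, TensorProduct.rid_tmul, hev, Finsupp.lapply_apply,
          MonoidAlgebra.coeffLinearEquiv_apply]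
        rw [MonoidAlgebra.coeff_single, Finsupp.single_eq_same]
        rw [one_smul, hp0]
        exact DirectSum.decompose_of_mem_same 𝒜 (SetLike.one_mem_graded 𝒜)
      rwa [hcomp] at this
    refine le_antisymm (Submodule.mul_le.2 fun a ha b hb => SetLike.mul_mem_graded ha hb) ?_
    intro x hx
    have h1 := key h
    have hx1 : x * 1 ∈ 𝒜 g * 𝒜 h := by
      refine Submodule.mul_induction_on (C := fun c => x * c ∈ 𝒜 g * 𝒜 h) h1 ?_ ?_
      · intro m hm n hn
        rw [← mul_assoc]
        refine Submodule.mul_mem_mul ?_ hn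
        have := SetLike.mul_mem_graded hx hm
        rwa [add_neg_cancel_right] at this
      · intro a b ha hb
        rw [mul_add]
        exact add_mem ha hb
    simpa using hx1
  · -- strongly graded → bijective
    intro hstrong
    have hone : ∀ g : G, (1 : R) ∈ 𝒜 (-g) * 𝒜 g := by
      intro g
      rw [hstrong, neg_add_cancel]
      exact SetLike.one_mem_graded 𝒜
    choose n v u hv hu hsum using fun g => exists_fin_rep (hone g)
    set q : G → (R →ₗ[k] ((R ⊗[k] R) ⧸ N)) := fun g =>
      ∑ i : Fin (n g), N.mkQ ∘ₗ ((TensorProduct.mk k R R).flip (u g i)) ∘ₗ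
        (LinearMap.mulRight k (v g i)) with hqdef
    have hq : ∀ g x, q g x =
        ∑ i : Fin (n g), Submodule.Quotient.mk ((x * v g i) ⊗ₜ u g i) := by
      intro g x
      rw [hqdef]
      simp [LinearMap.sum_apply]
    set B : MonoidAlgebra k (Multiplicative G) →ₗ[k] R →ₗ[k] ((R ⊗[k] R) ⧸ N) :=
      (Finsupp.lsum k fun gm =>
        LinearMap.toSpanSingleton k (R →ₗ[k] ((R ⊗[k] R) ⧸ N)) (q (Multiplicative.toAdd gm)))
        ∘ₗ (MonoidAlgebra.coeffLinearEquiv k).toLinearMap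
      with hBdef
    set γ : R ⊗[k] MonoidAlgebra k (Multiplicative G) →ₗ[k] ((R ⊗[k] R) ⧸ N) :=
      TensorProduct.lift B.flip with hγdef
    have hγ : ∀ (x : R) (gm : Multiplicative G) (c : k),
        γ (x ⊗ₜ MonoidAlgebra.single gm c) = c • q (Multiplicative.toAdd gm) x := by
      intro x gm c
      have hB : B (MonoidAlgebra.single gm c) = c • q (Multiplicative.toAdd gm) := by
        rw [hBdef]
        rw [LinearMap.comp_apply, LinearEquiv.coe_coe, MonoidAlgebra.coeffLinearEquiv_apply,
          MonoidAlgebra.coeff_single, Finsupp.lsum_single (S := k)]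
        rfl
      rw [hγdef, TensorProduct.lift.tmul, LinearMap.flip_apply, hB, LinearMap.smul_apply]
    have hstep : ∀ (x b : R) (j : G), b ∈ 𝒜 j →
        γ ((x * b) ⊗ₜ MonoidAlgebra.single (Multiplicative.ofAdd j) (1 : k))
          = Submodule.Quotient.mk (x ⊗ₜ b) := by
      intro x b j hb
      rw [hγ, one_smul]
      have htoAdd : Multiplicative.toAdd (Multiplicative.ofAdd j) = j := rfl
      rw [htoAdd, hq]
      have heach : ∀ i : Fin (n j),
          (Submodule.Quotient.mk ((x * b * v j i) ⊗ₜ u j i) : (R ⊗[k] R) ⧸ N)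
            = Submodule.Quotient.mk (x ⊗ₜ (b * v j i * u j i)) := by
        intro i
        have hm : b * v j i ∈ 𝒜 0 := by
          have := SetLike.mul_mem_graded hb (hv j i)
          rwa [add_neg_cancel] at this
        have := hrel x (u j i) (b * v j i) hm
        rw [← mul_assoc] at this
        exact this
      rw [Finset.sum_congr rfl fun i _ => heach i]
      have h1 : ∑ i : Fin (n j),
          (Submodule.Quotient.mk (x ⊗ₜ (b * v j i * u j i)) : (R ⊗[k] R) ⧸ N)
          = N.mkQ (x ⊗ₜ ∑ i : Fin (n j), b * v j i * u j i) := by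
        rw [TensorProduct.tmul_sum, map_sum]
        rfl
      have h2 : (∑ i : Fin (n j), b * v j i * u j i)
          = b * ∑ i : Fin (n j), v j i * u j i := by
        rw [Finset.mul_sum]
        exact Finset.sum_congr rfl fun i _ => mul_assoc _ _ _
      rw [h1, h2, hsum, mul_one]
      rfl
    have hγβ : ∀ w : R ⊗[k] R,
        γ (βbar (Submodule.Quotient.mk w)) = Submodule.Quotient.mk w := by
      intro w
      induction w using TensorProduct.induction_on with
      | zero => simp
      | add a b ha hb =>
        rw [show (Submodule.Quotient.mk (a + b : R ⊗[k] R) : (R ⊗[k] R) ⧸ N)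
            = Submodule.Quotient.mk a + Submodule.Quotient.mk b from rfl,
          map_add, map_add, ha, hb]
      | tmul x y =>
        rw [hβ, map_dfinsuppSum]
        have hterm : ∀ j (yj : ↥(𝒜 j)),
            γ ((x * (yj : R)) ⊗ₜ MonoidAlgebra.single (Multiplicative.ofAdd j) (1 : k))
              = Submodule.Quotient.mk (x ⊗ₜ (yj : R)) :=
          fun j yj => hstep x _ j yj.2
        have hunfold : (DFinsupp.sum ((DirectSum.decompose 𝒜) y) fun j yj =>
            γ ((x * (yj : R)) ⊗ₜ[k] MonoidAlgebra.single (Multiplicative.ofAdd j) (1 : k)))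
            = ∑ j ∈ ((DirectSum.decompose 𝒜) y).support,
                γ ((x * (((DirectSum.decompose 𝒜) y) j : R)) ⊗ₜ[k]
                  MonoidAlgebra.single (Multiplicative.ofAdd j) (1 : k)) := rfl
        rw [hunfold, Finset.sum_congr rfl fun j _ => hterm j _]
        have : ∑ j ∈ ((DirectSum.decompose 𝒜) y).support,
            (Submodule.Quotient.mk (x ⊗ₜ[k] ((((DirectSum.decompose 𝒜) y) j : R)))
              : (R ⊗[k] R) ⧸ N)
            = N.mkQ (x ⊗ₜ[k] (∑ j ∈ ((DirectSum.decompose 𝒜) y).support,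
                ((((DirectSum.decompose 𝒜) y) j : R)))) := by
          rw [TensorProduct.tmul_sum, map_sum]
          rfl
        rw [this, DirectSum.sum_support_decompose]
        rfl
    constructor
    · intro a b hab
      obtain ⟨wa, rfl⟩ := Submodule.Quotient.mk_surjective N a
      obtain ⟨wb, rfl⟩ := Submodule.Quotient.mk_surjective N b
      rw [← hγβ wa, ← hγβ wb, hab]
    · intro t
      have hmem : ∀ t : R ⊗[k] MonoidAlgebra k (Multiplicative G),
          t ∈ LinearMap.range βbar := by
        intro t
        induction t using TensorProduct.induction_on with
        | zero => exact zero_mem _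
        | add a b ha hb => exact add_mem ha hb
        | tmul x f =>
          induction f using MonoidAlgebra.induction_linear with
          | zero => rw [TensorProduct.tmul_zero]; exact zero_mem _
          | add f g hf hg => rw [TensorProduct.tmul_add]; exact add_mem hf hg
          | single gm c =>
            refine ⟨γ (x ⊗ₜ MonoidAlgebra.single gm c), ?_⟩
            rw [hγ, map_smul, hq, map_sum]
            have : ∀ i, βbar (Submodule.Quotient.mk ((x * v _ i) ⊗ₜ u _ i))
                = ((x * v (Multiplicative.toAdd gm) i) * u (Multiplicative.toAdd gm) i) ⊗ₜ
                  MonoidAlgebra.single gm (1 : k) := by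
              intro i
              have := hβhom (x * v (Multiplicative.toAdd gm) i)
                (u (Multiplicative.toAdd gm) i) (Multiplicative.toAdd gm)
                (hu (Multiplicative.toAdd gm) i)
              exact this
            rw [Finset.sum_congr rfl fun i _ => this i, ← TensorProduct.sum_tmul]
            rw [show ∑ i : Fin (n (Multiplicative.toAdd gm)),
                x * v (Multiplicative.toAdd gm) i * u (Multiplicative.toAdd gm) i
                = x * ∑ i, v (Multiplicative.toAdd gm) i * u (Multiplicative.toAdd gm) i by
              rw [Finset.mul_sum]; exact Finset.sum_congr rfl fun i _ => (mul_assoc _ _ _)]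
            rw [hsum, mul_one]
            rw [show (MonoidAlgebra.single gm c : MonoidAlgebra k (Multiplicative G))
                = c • MonoidAlgebra.single gm (1 : k) from by rw [MonoidAlgebra.smul_single', mul_one]]
            rw [TensorProduct.tmul_smul]
      exact hmem t
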